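/- Let k ≥ 3 be a natural number and let A be an invertible 2×2 real matrix whose order in GL(2,ℝ) is exactly k (i.e. A^k = I and A^j ≠ I for 0 < j < k). Then there exist an invertible 2×2 real matrix P and a natural number m coprime to k such that P⁻¹·A·P = R_{2πm/k}, the rotation matrix by angle 2πm/k. -/

import Mathlib

/-- The rotation matrix of the plane by angle `θ`. -/
noncomputable def rotMat (θ : ℝ) : Matrix (Fin 2) (Fin 2) ℝ :=
  !![Real.cos θ, -Real.sin θ; Real.sin θ, Real.cos θ]

abbrev Mat := Matrix (Fin 2) (Fin 2) ℝ


lemma rot_mul (θ ψ : ℝ) : rotMat θ * rotMat ψ = rotMat (θ + ψ) := by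
  simp only [rotMat, Matrix.mul_fin_two, Real.cos_add, Real.sin_add]
  congr 1 <;> ring_nf

lemma rot_pow (n : ℕ) (θ : ℝ) : rotMat θ ^ n = rotMat (n * θ) := by
  induction n with
  | zero => simp [rotMat, Matrix.one_fin_two]
  | succ n ih =>
    rw [pow_succ, ih, rot_mul]
    congr 1
    push_cast
    ring

lemma rot_int (z : ℤ) : rotMat (z * (2 * Real.pi)) = 1 := by
  have h1 : Real.cos (z * (2 * Real.pi)) = 1 := Real.cos_int_mul_two_pi z
  have h2 : Real.sin (z * (2 * Real.pi)) = 0 := by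
    have := Real.sin_sq_add_cos_sq (z * (2 * Real.pi))
    rw [h1] at this
    nlinarith
  simp [rotMat, h1, h2, Matrix.one_fin_two]


lemma seq_lemma (A : Mat) (t d lp lm : ℝ) (hCH : A*A = t•A - d•(1:Mat))
    (hsum : lp + lm = t) (hprod : lp * lm = d) :
    ∀ n : ℕ, A^(n+1) - lm • A^n = lp^n • (A - lm • (1:Mat)) := by
  intro n
  induction n with
  | zero => simp
  | succ n ih =>
    have h1 : A^(n+2) - lm • A^(n+1) = A * (A^(n+1) - lm • A^n) := by
      rw [mul_sub, Matrix.mul_smul, ← pow_succ', ← pow_succ']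
    rw [h1, ih, Matrix.mul_smul, mul_sub, Matrix.mul_smul, mul_one, hCH,
      ← hsum, ← hprod]
    rw [pow_succ]
    module

lemma real_pow_one {x : ℝ} {k : ℕ} (hk : k ≠ 0) (h : x^k = 1) : x = 1 ∨ x = -1 := by
  have habs : |x| ^ k = 1 := by rw [← abs_pow, h, abs_one]
  have h1 : |x| = 1 := by
    rcases lt_trichotomy |x| 1 with h' | h' | h'
    · have := pow_lt_one₀ (abs_nonneg x) h' hk; linarith
    · exact h'
    · have := one_lt_pow₀ h' hk; linarith
  exact abs_eq (by norm_num : (0:ℝ) ≤ 1) |>.mp h1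

lemma real_pow_one_pos {x : ℝ} {k : ℕ} (hk : k ≠ 0) (hx : 0 < x) (h : x^k = 1) : x = 1 := by
  rcases real_pow_one hk h with h | h
  · exact h
  · linarith

lemma nilp (M : Mat) (h : (M-1)*(M-1) = 0) (n : ℕ) : M^n = 1 + (n:ℝ)•(M - 1) := by
  induction n with
  | zero => simp
  | succ n ih =>
    have hM : M * (M - 1) = M - 1 := by
      have : M * (M-1) = (M-1)*(M-1) + (M-1) := by noncomm_ring
      rw [this, h, zero_add]
    rw [pow_succ', ih, mul_add, mul_one, Matrix.mul_smul, hM]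
    push_cast
    module

lemma CH (A : Mat) : A * A = (A 0 0 + A 1 1) • A - (A 0 0 * A 1 1 - A 0 1 * A 1 0) • (1:Mat) := by
  ext i j
  fin_cases i <;> fin_cases j <;>
    simp [Matrix.mul_apply, Fin.sum_univ_two, Matrix.one_apply] <;> ring

lemma scalar_entry {r : ℝ} (h : r • (1:Mat) = 1) : r = 1 := by
  have := congrFun (congrFun h 0) 0
  simpa [Matrix.one_apply] using this

lemma scalar_case (k : ℕ) (hk : 3 ≤ k) (A : Mat) (hAk : A ^ k = 1)
    (hAj : ∀ j, 0 < j → j < k → A ^ j ≠ 1) (c : ℝ) (hc : A = c • (1:Mat)) : False := by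
  have hck : c ^ k = 1 := by
    rw [hc, smul_pow, one_pow] at hAk
    exact scalar_entry hAk
  have hc2 : c^2 = 1 := by
    rcases real_pow_one (by omega) hck with h | h <;> rw [h] <;> ring
  exact hAj 2 (by norm_num) (by omega) (by rw [hc, smul_pow, one_pow, hc2, one_smul])

lemma disc_neg (k : ℕ) (hk : 3 ≤ k) (A : Mat) (hAk : A ^ k = 1)
    (hAj : ∀ j, 0 < j → j < k → A ^ j ≠ 1) :
    (A 0 0 + A 1 1)^2 < 4 * (A 0 0 * A 1 1 - A 0 1 * A 1 0) := by
  by_contra hcon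
  push_neg at hcon
  set t := A 0 0 + A 1 1 with ht
  set d := A 0 0 * A 1 1 - A 0 1 * A 1 0 with hd
  have hCH := CH A
  rw [← ht, ← hd] at hCH
  have hk0 : k ≠ 0 := by omega
  set δ := Real.sqrt (t^2 - 4*d) with hδdef
  have hδ2 : δ^2 = t^2 - 4*d := Real.sq_sqrt (by linarith)
  set lp := (t + δ)/2 with hlp
  set lm := (t - δ)/2 with hlm
  have hsum : lp + lm = t := by rw [hlp, hlm]; ring
  have hsum' : lm + lp = t := by rw [hlp, hlm]; ring
  have hprod : lp * lm = d := by
    have h4 : lp * lm = (t^2 - δ^2)/4 := by rw [hlp, hlm]; ring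
    rw [h4, hδ2]; ring
  have hprod' : lm * lp = d := by rw [mul_comm]; exact hprod
  -- if A is scalar lm•1 or lp•1, done
  by_cases hsp : A = lp • (1:Mat)
  · exact scalar_case k hk A hAk hAj lp hsp
  by_cases hsm : A = lm • (1:Mat)
  · exact scalar_case k hk A hAk hAj lm hsm
  -- otherwise lp^k = 1 and lm^k = 1
  have key : ∀ (x y : ℝ), x + y = t → x * y = d → A ≠ y • 1 → x ^ k = 1 := by
    intro x y hxy hxyd hne
    have h1 := seq_lemma A t d x y hCH hxy hxyd k
    rw [hAk, pow_succ, hAk, one_mul] at h1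
    have h2 : (x^k - 1) • (A - y • (1:Mat)) = 0 := by
      rw [sub_smul, one_smul, ← h1]
      abel
    rcases smul_eq_zero.mp h2 with h | h
    · linarith [sub_eq_zero.mp (by linarith [h] : x^k - 1 = 0)]
    · exact absurd (sub_eq_zero.mp h) hne
  have hlpk : lp ^ k = 1 := key lp lm hsum hprod hsm
  have hlmk : lm ^ k = 1 := key lm lp hsum' hprod' hsp
  rcases real_pow_one hk0 hlpk with hp1 | hp1 <;> rcases real_pow_one hk0 hlmk with hm1 | hm1
  -- four cases
  · -- lp = lm = 1 : nilpotent
    have hN : (A - 1) * (A - 1) = 0 := by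
      have hteq : t = 2 := by rw [← hsum, hp1, hm1]; norm_num
      have hdeq : d = 1 := by rw [← hprod, hp1, hm1]; norm_num
      rw [sub_mul, mul_sub, mul_sub]
      simp only [mul_one, one_mul]
      rw [hCH, hteq, hdeq]
      module
    have hMk := nilp A hN k
    rw [hAk] at hMk
    have h0 : (k:ℝ) • (A - 1) = 0 := (left_eq_add.mp hMk)
    have hA1 : A = 1 := by
      rcases smul_eq_zero.mp h0 with h | h
      · exact absurd h (Nat.cast_ne_zero.mpr hk0)
      · exact sub_eq_zero.mp h
    exact hAj 1 (by norm_num) (by omega) (by rw [pow_one, hA1])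
  · -- lp = 1, lm = -1 : A^2 = 1
    have hteq : t = 0 := by rw [← hsum, hp1, hm1]; norm_num
    have hdeq : d = -1 := by rw [← hprod, hp1, hm1]; norm_num
    have hsq : A ^ 2 = 1 := by
      rw [pow_two, hCH, hteq, hdeq]
      module
    exact hAj 2 (by norm_num) (by omega) hsq
  · -- lp = -1, lm = 1
    have hteq : t = 0 := by rw [← hsum, hp1, hm1]; norm_num
    have hdeq : d = -1 := by rw [← hprod, hp1, hm1]; norm_num
    have hsq : A ^ 2 = 1 := by
      rw [pow_two, hCH, hteq, hdeq]
      module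
    exact hAj 2 (by norm_num) (by omega) hsq
  · -- lp = lm = -1
    set M : Mat := (-1:ℝ) • A with hM
    have hteq : t = -2 := by rw [← hsum, hp1, hm1]; norm_num
    have hdeq : d = 1 := by rw [← hprod, hp1, hm1]; norm_num
    have hM1 : M - 1 = (-1:ℝ) • (A + 1) := by rw [hM]; module
    have hMN : (M - 1) * (M - 1) = 0 := by
      rw [hM1, Matrix.smul_mul, Matrix.mul_smul, smul_smul]
      norm_num
      rw [add_mul, mul_add, mul_add]
      simp only [mul_one, one_mul]
      rw [hCH, hteq, hdeq]
      module
    have hMk := nilp M hMN k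
    have hAM : A = (-1:ℝ) • M := by rw [hM, smul_smul]; norm_num
    have hAkM : ((-1:ℝ))^k • M^k = 1 := by rw [← smul_pow, ← hAM, hAk]
    rw [hMk] at hAkM
    have hMone : M = 1 := by
      rcases Nat.even_or_odd k with he | ho
      · rw [he.neg_one_pow, one_smul] at hAkM
        have h0 : (k:ℝ) • (M - 1) = 0 := (left_eq_add.mp hAkM.symm)
        rcases smul_eq_zero.mp h0 with h | h
        · exact absurd h (Nat.cast_ne_zero.mpr hk0)
        · exact sub_eq_zero.mp h
      · have h3 : ((-1:ℝ))^k • ((1 + (k:ℝ) • (M-1)) * (M - 1)) = 1 * (M - 1) := by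
          rw [← Matrix.smul_mul, hAkM]
        rw [add_mul, Matrix.smul_mul, hMN, smul_zero, add_zero] at h3
        simp only [one_mul] at h3
        rw [ho.neg_one_pow, neg_smul, one_smul] at h3
        have h4 : (-2:ℝ) • (M - 1) = 0 := by
          have h5 : (-2:ℝ) • (M-1) = -(M-1) - (M-1) := by module
          rw [h3, sub_self] at h5
          exact h5
        rcases smul_eq_zero.mp h4 with h | h
        · norm_num at h
        · exact sub_eq_zero.mp h
    have : A = (-1:ℝ) • (1:Mat) := by rw [hAM, hMone]
    exact scalar_case k hk A hAk hAj (-1) this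

theorem stmt_3 (k : ℕ) (hk : 3 ≤ k) (A : Matrix (Fin 2) (Fin 2) ℝ)
    (hA : IsUnit A) (hAk : A ^ k = 1) (hAj : ∀ j : ℕ, 0 < j → j < k → A ^ j ≠ 1) :
    ∃ (P : Matrix (Fin 2) (Fin 2) ℝ) (m : ℕ), IsUnit P ∧ Nat.Coprime m k ∧
      P⁻¹ * A * P = rotMat (2 * Real.pi * m / k) := by
  have hk0 : k ≠ 0 := by omega
  have hdisc := disc_neg k hk A hAk hAj
  have hdet1 : A 0 0 * A 1 1 - A 0 1 * A 1 0 = 1 := by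
    have h1 : (A 0 0 * A 1 1 - A 0 1 * A 1 0) ^ k = 1 := by
      rw [← Matrix.det_fin_two A, ← Matrix.det_pow, hAk, Matrix.det_one]
    exact real_pow_one_pos hk0 (by nlinarith [sq_nonneg (A 0 0 + A 1 1)]) h1
  obtain ⟨a, b, c, e, rfl⟩ : ∃ a b c e, A = !![a,b;c,e] :=
    ⟨_,_,_,_, Matrix.eta_fin_two A⟩
  simp only [Matrix.of_apply, Matrix.cons_val', Matrix.cons_val_zero, Matrix.cons_val_one, Matrix.head_cons,
    Matrix.head_fin_const, Matrix.empty_val', Matrix.cons_val_fin_one] at hdisc hdet1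
  norm_num at hdisc hdet1
  rw [hdet1] at hdisc
  -- now hdisc : (a+e)^2 < 4
  set a0 : ℝ := (a + e)/2 with ha0def
  have ha0lt : a0 < 1 := by rw [ha0def]; nlinarith
  have ha0gt : -1 < a0 := by rw [ha0def]; nlinarith
  set φ := Real.arccos a0 with hφdef
  have hcos : Real.cos φ = a0 := Real.cos_arccos (by linarith) (by linarith)
  set s := Real.sin φ with hsdef
  have hs : s = Real.sqrt (1 - a0^2) := by rw [hsdef, hφdef, Real.sin_arccos]
  have hspos : 0 < s := by rw [hs]; apply Real.sqrt_pos.mpr; nlinarith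
  have hs2 : s^2 = 1 - a0^2 := by rw [hs, Real.sq_sqrt (by nlinarith)]
  have hc0 : c ≠ 0 := by intro h; rw [h] at hdet1; nlinarith [sq_nonneg (a - e)]
  set P : Mat := !![1, (a - a0)/s; 0, c/s] with hPdef
  have hdetP : P.det = c/s := by rw [hPdef, Matrix.det_fin_two_of]; ring
  have hdetP0 : IsUnit P.det := by
    rw [hdetP, isUnit_iff_ne_zero]
    exact div_ne_zero hc0 (ne_of_gt hspos)
  have hPunit : IsUnit P := (Matrix.isUnit_iff_isUnit_det P).mpr hdetP0
  have hAP : !![a,b;c,e] * P = P * rotMat φ := by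
    rw [hPdef, rotMat]
    ext i j
    fin_cases i <;> fin_cases j <;>
      simp only [Matrix.mul_apply, Fin.sum_univ_two, Matrix.of_apply, Fin.zero_eta, Fin.mk_one, Matrix.cons_val', Matrix.cons_val_zero,
        Matrix.cons_val_one, Matrix.head_cons, Matrix.head_fin_const, Matrix.empty_val',
        Matrix.cons_val_fin_one, hcos]
    · field_simp
      rw [← hsdef]; ring
    · field_simp
      rw [← hsdef]
      linear_combination hs2 - hdet1 - 2*a*ha0def
    · field_simp
      rw [← hsdef]; ring
    · field_simp
      ring
  have hPinv : P⁻¹ * P = 1 := Matrix.nonsing_inv_mul P hdetP0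
  have hPPinv : P * P⁻¹ = 1 := Matrix.mul_nonsing_inv P hdetP0
  have hconj : P⁻¹ * !![a,b;c,e] * P = rotMat φ := by
    rw [mul_assoc, hAP, ← mul_assoc, hPinv, one_mul]
  have hrot0 : rotMat 0 = 1 := by simp [rotMat, Matrix.one_fin_two]
  have hpowP : ∀ n : ℕ, !![a,b;c,e] ^ n * P = P * rotMat (n * φ) := by
    intro n
    induction n with
    | zero => simp [hrot0]
    | succ n ih =>
      rw [pow_succ, mul_assoc, hAP, ← mul_assoc, ih, mul_assoc, rot_mul]
      push_cast
      ring_nf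
  have hrotk : rotMat (k * φ) = 1 := by
    have h1 := hpowP k
    rw [hAk, one_mul] at h1
    calc rotMat (k * φ) = P⁻¹ * (P * rotMat (k * φ)) := by rw [← mul_assoc, hPinv, one_mul]
    _ = P⁻¹ * P := by rw [← h1]
    _ = 1 := hPinv
  have hcosk : Real.cos (k * φ) = 1 := by
    have := congrFun (congrFun hrotk 0) 0
    simpa [rotMat, Matrix.one_apply] using this
  obtain ⟨n, hn⟩ := (Real.cos_eq_one_iff _).mp hcosk
  have hφpos : 0 < φ := Real.arccos_pos.mpr ha0lt
  have hφltpi : φ < Real.pi := by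
    rcases lt_or_eq_of_le (Real.arccos_le_pi a0) with h | h
    · exact h
    · exfalso; rw [hφdef] at hsdef; rw [h] at hsdef; rw [hsdef] at hspos
      simp [Real.sin_pi] at hspos
  have hpi := Real.pi_pos
  have hkr : (0:ℝ) < k := by exact_mod_cast Nat.pos_of_ne_zero hk0
  have hnpos : 0 < n := by
    by_contra h
    push_neg at h
    have : (n:ℝ) ≤ 0 := by exact_mod_cast h
    nlinarith [mul_pos hkr hφpos]
  have hnk : (n:ℝ) * 2 < k := by
    have : (k:ℝ) * φ < k * Real.pi := by nlinarith
    nlinarith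
  set m := n.toNat with hmdef
  have hmn : (m:ℝ) = (n:ℝ) := by
    rw [hmdef]
    exact_mod_cast congrArg (Int.cast : ℤ → ℝ) (Int.toNat_of_nonneg (le_of_lt hnpos))
  have hmpos : 0 < m := by rw [hmdef]; omega
  have hφeq : φ = 2 * Real.pi * m / k := by
    rw [hmn]
    field_simp
    linarith [hn]
  have hcop : Nat.Coprime m k := by
    by_contra hco
    have hg1 : Nat.gcd m k ≠ 1 := hco
    have hgpos : 0 < Nat.gcd m k := Nat.gcd_pos_of_pos_right m (Nat.pos_of_ne_zero hk0)
    obtain ⟨k', hk'⟩ := Nat.gcd_dvd_right m k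
    obtain ⟨m', hm'⟩ := Nat.gcd_dvd_left m k
    set g := Nat.gcd m k
    have hg2 : 2 ≤ g := by omega
    have hk'pos : 0 < k' := by
      rcases Nat.eq_zero_or_pos k' with h | h
      · exfalso; rw [h, mul_zero] at hk'; omega
      · exact h
    have hk'lt : k' < k := by
      have : g * k' ≥ 2 * k' := Nat.mul_le_mul_right k' hg2
      omega
    have hstep : (k':ℝ) * φ = ((m':ℤ):ℝ) * (2 * Real.pi) := by
      have hkr' : (k:ℝ) = (g:ℝ) * k' := by exact_mod_cast congrArg (Nat.cast : ℕ → ℝ) hk'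
      have hmr' : (m:ℝ) = (g:ℝ) * m' := by exact_mod_cast congrArg (Nat.cast : ℕ → ℝ) hm'
      have hgne : (g:ℝ) ≠ 0 := by positivity
      have hk'ne : (k':ℝ) ≠ 0 := by positivity
      rw [hφeq, hmr', hkr']
      push_cast
      field_simp
    have hArot : !![a,b;c,e] ^ k' * P = P := by
      rw [hpowP k', hstep, rot_int, mul_one]
    have hAone : !![a,b;c,e] ^ k' = 1 := by
      calc !![a,b;c,e] ^ k' = !![a,b;c,e] ^ k' * (P * P⁻¹) := by rw [hPPinv, mul_one]
      _ = (!![a,b;c,e] ^ k' * P) * P⁻¹ := by rw [mul_assoc]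
      _ = P * P⁻¹ := by rw [hArot]
      _ = 1 := hPPinv
    exact hAj k' hk'pos hk'lt hAone
  exact ⟨P, m, hPunit, hcop, by rw [← hφeq]; exact hconj⟩
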